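/- Any two trees on the same number n of vertices have the same Smith normal form of their distance matrices; equivalently, for any two trees T_1 and T_2 on n vertices, the distance matrices D(T_1) and D(T_2) are equivalent over ℤ. -/

import Mathlib

open Matrix MvPolynomial

variable {V : Type*}

/-- The distance matrix of a graph: the `(u,v)` entry is the graph distance `d_G(u,v)`. -/
noncomputable def distMatrix [Fintype V] (G : SimpleGraph V) : Matrix V V ℤ :=
  fun u v => (G.dist u v : ℤ)

/-- The transmission of a vertex: the sum of the distances to all vertices. -/
noncomputable def transmission [Fintype V] (G : SimpleGraph V) (u : V) : ℤ :=
  ∑ v, (G.dist u v : ℤ)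

/-- The distance Laplacian matrix `D^L(G) = diag(tr) - D(G)`. -/
noncomputable def distLaplacian [Fintype V] [DecidableEq V] (G : SimpleGraph V) : Matrix V V ℤ :=
  Matrix.diagonal (transmission G) - distMatrix G

/-- The signless distance Laplacian matrix `D^Q(G) = diag(tr) + D(G)`. -/
noncomputable def signlessDistLaplacian [Fintype V] [DecidableEq V] (G : SimpleGraph V) : Matrix V V ℤ :=
  Matrix.diagonal (transmission G) + distMatrix G

/-- Two integer matrices are equivalent over `ℤ` if `M = U * N * W` with `U`, `W`
invertible over `ℤ` (unimodular). -/
def MatEquivZ [Fintype V] [DecidableEq V] (M N : Matrix V V ℤ) : Prop :=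
  ∃ U W : Matrix V V ℤ, IsUnit U.det ∧ IsUnit W.det ∧ M = U * N * W

/-- `f` lists the diagonal entries of the Smith normal form of `M`:
the diagonal matrix `diagonal f` is equivalent to `M` over `ℤ`, consecutive entries
divide each other, and the entries are nonnegative (normalization over `ℤ`). -/
def IsSNF {N : ℕ} (M : Matrix (Fin N) (Fin N) ℤ) (f : Fin N → ℤ) : Prop :=
  MatEquivZ M (Matrix.diagonal f) ∧ (∀ i j : Fin N, i ≤ j → f i ∣ f j) ∧ ∀ i, 0 ≤ f i

/-- The ideal generated by the determinants of all `k × k` submatrices of `M`. -/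
def minorsIdeal {R : Type*} [CommRing R] [Fintype V] (M : Matrix V V R) (k : ℕ) : Ideal R :=
  Ideal.span (Set.range fun p : (Fin k → V) × (Fin k → V) => (M.submatrix p.1 p.2).det)

/-- The generalized distance matrix `D(G, X_G) = diag(X_G) + D(G)` over `ℤ[X_G]`. -/
noncomputable def genDistMatrix [Fintype V] [DecidableEq V] (G : SimpleGraph V) :
    Matrix V V (MvPolynomial V ℤ) :=
  Matrix.diagonal (fun u => MvPolynomial.X u) +
    (distMatrix G).map (fun a => (a : MvPolynomial V ℤ))

/-- The `k`-th distance ideal `I_k(G, X_G)`: the ideal of `ℤ[X_G]` generated by the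
determinants of all `k × k` submatrices of the generalized distance matrix. -/
noncomputable def distIdeal [Fintype V] [DecidableEq V] (G : SimpleGraph V) (k : ℕ) :
    Ideal (MvPolynomial V ℤ) :=
  minorsIdeal (genDistMatrix G) k

section TreeAux

open SimpleGraph

/-- In a tree, adjacent vertices have different distances to any vertex. -/
lemma tree_dist_ne [DecidableEq V] {G : SimpleGraph V} (hG : G.IsTree) {a b : V} (hab : G.Adj a b) (w : V) :
    G.dist w a ≠ G.dist w b := by
  intro h
  have hc := hG.isConnected
  obtain ⟨p1, hp1, hl1⟩ := hc.exists_path_of_dist w a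
  obtain ⟨p2, hp2, hl2⟩ := hc.exists_path_of_dist w b
  have hane : a ∉ p2.support := by
    intro hmem
    have h1 : G.dist w a ≤ (p2.takeUntil a hmem).length := dist_le _
    have h2 : G.dist a b ≤ (p2.dropUntil a hmem).length := dist_le _
    have h3 : (p2.takeUntil a hmem).length + (p2.dropUntil a hmem).length = p2.length := by
      rw [← Walk.length_append, p2.take_spec hmem]
    have hab1 : G.dist a b = 1 := dist_eq_one_iff_adj.mpr hab
    omega
  have hW : (p2.concat hab.symm).IsPath := by
    rw [← Walk.isPath_reverse_iff, Walk.reverse_concat]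
    exact (hp2.reverse).cons (by simpa using hane)
  have heq : p2.concat hab.symm = p1 := ((hG.existsUnique_path w a).unique hW hp1)
  have hlen := congrArg Walk.length heq
  rw [Walk.length_concat] at hlen
  omega

/-- The key "crossing" configuration is impossible in a tree. -/
lemma tree_cross [DecidableEq V] {G : SimpleGraph V} (hG : G.IsTree) {u p v q : V}
    (hup : G.Adj u p) (hvq : G.Adj v q) (huv : u ≠ v)
    (h1 : G.dist p v = G.dist u v + 1) (h2 : G.dist u q = G.dist p q + 1)
    (h3 : G.dist u q = G.dist u v + 1) : False := by
  have hc := hG.isConnected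
  obtain ⟨R, hR, hRl⟩ := hc.exists_path_of_dist p q
  have hRa : R.length = G.dist u v := by omega
  have hvR : v ∉ R.support := by
    intro hm
    have hd : G.dist p v ≤ (R.takeUntil v hm).length := dist_le _
    have hle := R.length_takeUntil_le hm
    omega
  have huR : u ∉ R.support := by
    intro hm
    have hd : G.dist u q ≤ (R.dropUntil u hm).length := dist_le _
    have hle := R.length_dropUntil_le hm
    omega
  have hW1 : (R.concat hvq.symm).IsPath := by
    rw [← Walk.isPath_reverse_iff, Walk.reverse_concat]
    exact (hR.reverse).cons (by simpa using hvR)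
  obtain ⟨S, hS, hSl⟩ := hc.exists_path_of_dist u v
  have hpS : p ∉ S.support := by
    intro hm
    have hd : G.dist p v ≤ (S.dropUntil p hm).length := dist_le _
    have hle := S.length_dropUntil_le hm
    omega
  have hW2 : (Walk.cons hup.symm S).IsPath := hS.cons hpS
  have heq : R.concat hvq.symm = Walk.cons hup.symm S :=
    (hG.existsUnique_path p v).unique hW1 hW2
  have hu2 : u ∈ (Walk.cons hup.symm S).support := by
    simp [Walk.support_cons]
  rw [← heq, Walk.support_concat] at hu2
  rw [List.mem_append] at hu2
  rcases hu2 with hmem | hmem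
  · exact huR hmem
  · exact huv (by simpa using hmem)

/-- The four-point distance identity in a tree. -/
lemma tree_key [DecidableEq V] {G : SimpleGraph V} (hG : G.IsTree) {u pu v pv : V}
    (hu : G.Adj u pu) (hv : G.Adj v pv) (huv : u ≠ v) (hne : ¬(u = pv ∧ v = pu)) :
    G.dist u v + G.dist pu pv = G.dist u pv + G.dist pu v := by
  have hc := hG.isConnected
  have hd1 : G.dist u pu = 1 := dist_eq_one_iff_adj.mpr hu
  have hd1' : G.dist pu u = 1 := dist_eq_one_iff_adj.mpr hu.symm
  have hd2 : G.dist v pv = 1 := dist_eq_one_iff_adj.mpr hv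
  have hd2' : G.dist pv v = 1 := dist_eq_one_iff_adj.mpr hv.symm
  have f1 : G.dist pu v ≠ G.dist u v := by
    have := tree_dist_ne hG hu v
    rw [show G.dist v u = G.dist u v from SimpleGraph.dist_comm,
      show G.dist v pu = G.dist pu v from SimpleGraph.dist_comm] at this
    omega
  have f2 : G.dist pu pv ≠ G.dist u pv := by
    have := tree_dist_ne hG hu pv
    rw [show G.dist pv u = G.dist u pv from SimpleGraph.dist_comm,
      show G.dist pv pu = G.dist pu pv from SimpleGraph.dist_comm] at this
    omega
  have f3 : G.dist u pv ≠ G.dist u v := by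
    have := tree_dist_ne hG hv u; omega
  have f4 : G.dist pu pv ≠ G.dist pu v := by
    have := tree_dist_ne hG hv pu; omega
  have t1 : G.dist pu v ≤ G.dist pu u + G.dist u v := hc.dist_triangle
  have t1' : G.dist u v ≤ G.dist u pu + G.dist pu v := hc.dist_triangle
  have t2 : G.dist pu pv ≤ G.dist pu v + G.dist v pv := hc.dist_triangle
  have t2' : G.dist pu v ≤ G.dist pu pv + G.dist pv v := hc.dist_triangle
  have t3 : G.dist u pv ≤ G.dist u v + G.dist v pv := hc.dist_triangle
  have t3' : G.dist u v ≤ G.dist u pv + G.dist pv v := hc.dist_triangle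
  have t4 : G.dist pu pv ≤ G.dist pu u + G.dist u pv := hc.dist_triangle
  have t4' : G.dist u pv ≤ G.dist u pu + G.dist pu pv := hc.dist_triangle
  by_cases hb : G.dist pu v = G.dist u v + 1
  · by_cases he : G.dist pu pv = G.dist u pv + 1
    · omega
    · have hec : G.dist u pv = G.dist pu pv + 1 := by omega
      by_cases hcc : G.dist u pv = G.dist u v + 1
      · exact (tree_cross hG hu hv huv hb hec hcc).elim
      · omega
  · have hb' : G.dist u v = G.dist pu v + 1 := by omega
    by_cases he : G.dist u pv = G.dist pu pv + 1
    · omega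
    · have he' : G.dist pu pv = G.dist u pv + 1 := by omega
      by_cases heb : G.dist pu pv = G.dist pu v + 1
      · have hpuv : pu ≠ v := by
          intro hh
          have hb0 : G.dist pu v = 0 := by rw [hh]; exact SimpleGraph.dist_self
          have hc0 : G.dist u pv = 0 := by omega
          have : u = pv := (hc.dist_eq_zero_iff).mp hc0
          exact hne ⟨this, hh.symm⟩
        exact (tree_cross hG hu.symm hv hpuv hb' he' heb).elim
      · omega

/-- Every non-root vertex of a connected graph has a neighbour closer to the root. -/
lemma tree_parent {G : SimpleGraph V} (hc : G.Connected) {r v : V} (h : v ≠ r) :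
    ∃ x, G.Adj v x ∧ G.dist r x + 1 = G.dist r v := by
  have hd : G.dist v r ≠ 0 := by
    rw [SimpleGraph.dist_ne_zero_iff_ne_and_reachable]
    exact ⟨h, hc v r⟩
  obtain ⟨p, hp⟩ := SimpleGraph.exists_walk_of_dist_ne_zero hd
  cases p with
  | nil => exact absurd rfl h
  | @cons _ x _ h' p' =>
    refine ⟨x, h', ?_⟩
    have l1 : G.dist x r ≤ p'.length := SimpleGraph.dist_le p'
    have l2 : G.dist r v ≤ G.dist r x + G.dist x v := hc.dist_triangle
    have l3 : G.dist x v = 1 := SimpleGraph.dist_eq_one_iff_adj.mpr h'.symm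
    have l4 : G.dist r x = G.dist x r := SimpleGraph.dist_comm
    have l5 : G.dist r v = G.dist v r := SimpleGraph.dist_comm
    have hp' : p'.length + 1 = G.dist v r := by simpa using hp
    omega

/-- The canonical congruence form of the distance matrix of a tree rooted at `r`. -/
def canonMat [DecidableEq V] (r : V) : Matrix V V ℤ :=
  fun u v => if u = r then (if v = r then 0 else 1)
    else if v = r then 1 else if u = v then -2 else 0

lemma tree_equiv_canon [DecidableEq V] [Fintype V] (G : SimpleGraph V) (hG : G.IsTree) (r : V) :
    ∃ P : Matrix V V ℤ, IsUnit P.det ∧ P * distMatrix G * Pᵀ = canonMat r := by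
  classical
  have hc := hG.isConnected
  have hex : ∀ v : V, ∃ x, v ≠ r → G.Adj v x ∧ G.dist r x + 1 = G.dist r v := by
    intro v
    by_cases h : v = r
    · exact ⟨r, fun hh => absurd h hh⟩
    · obtain ⟨x, hx⟩ := tree_parent hc h
      exact ⟨x, fun _ => hx⟩
  choose par hpar using hex
  set D := distMatrix G with hDdef
  set P : Matrix V V ℤ := fun u a =>
    (if a = u then 1 else 0) - (if u = r then 0 else if a = par u then 1 else 0) with hPdef
  have hL : ∀ (M : Matrix V V ℤ) (u w : V),
      (P * M) u w = M u w - (if u = r then 0 else M (par u) w) := by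
    intro M u w
    rw [Matrix.mul_apply]
    simp only [hPdef, sub_mul, ite_mul, one_mul, zero_mul, Finset.sum_sub_distrib]
    rw [Finset.sum_ite_eq' Finset.univ u fun a => M a w]
    by_cases h : u = r
    · simp [h]
    · simp only [h, if_false, if_neg]
      rw [Finset.sum_ite_eq' Finset.univ (par u) fun a => M a w]
      simp
  have hR : ∀ (M : Matrix V V ℤ) (u w : V),
      (M * Pᵀ) u w = M u w - (if w = r then 0 else M u (par w)) := by
    intro M u w
    rw [Matrix.mul_apply]
    simp only [Matrix.transpose_apply]
    simp only [hPdef, mul_sub, mul_ite, mul_one, mul_zero,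
      Finset.sum_sub_distrib]
    rw [Finset.sum_ite_eq' Finset.univ w fun b => M u b]
    by_cases h : w = r
    · simp [h]
    · simp only [h, if_false, if_neg]
      rw [Finset.sum_ite_eq' Finset.univ (par w) fun b => M u b]
      simp
  refine ⟨P, ?_, ?_⟩
  · have hb : Pᵀ.BlockTriangular (fun v => G.dist r v) := by
      intro i j hij
      have hij2 : G.dist r j < G.dist r i := hij
      simp only [Matrix.transpose_apply]
      simp only [hPdef]
      have hij' : i ≠ j := fun hh => by rw [hh] at hij2; exact lt_irrefl _ hij2
      by_cases hj : j = r
      · rw [if_neg hij', if_pos hj, sub_zero]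
      · have hp2 := (hpar j hj).2
        have hipj : i ≠ par j := by
          intro hh
          rw [← hh] at hp2
          omega
        rw [if_neg hij', if_neg hj, if_neg hipj, sub_zero]
    have hdet : Pᵀ.det = 1 := by
      rw [hb.det]
      refine Finset.prod_eq_one fun a _ => ?_
      have hblock : Pᵀ.toSquareBlock (fun v => G.dist r v) a = 1 := by
        ext i j
        simp only [Matrix.toSquareBlock_def, Matrix.submatrix_apply, Matrix.of_apply,
          Matrix.transpose_apply, Matrix.one_apply]
        simp only [hPdef]
        have keyne : (j : V) ≠ r → (i : V) ≠ par (j : V) := by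
          intro hjr hh
          have hp2 := (hpar (j : V) hjr).2
          rw [← hh] at hp2
          have hi2 : G.dist r (i : V) = a := i.2
          have hj2 : G.dist r (j : V) = a := j.2
          omega
        by_cases hij : i = j
        · have hii : (i : V) = (j : V) := by rw [hij]
          rw [if_pos hii, if_pos hij]
          by_cases hjr : (j : V) = r
          · rw [if_pos hjr, sub_zero]
          · rw [if_neg hjr, if_neg (keyne hjr), sub_zero]
        · have hii : (i : V) ≠ (j : V) := fun hh => hij (Subtype.ext hh)
          rw [if_neg hii, if_neg hij]
          by_cases hjr : (j : V) = r
          · rw [if_pos hjr, sub_zero]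
          · rw [if_neg hjr, if_neg (keyne hjr), sub_zero]
      rw [hblock, Matrix.det_one]
    have hPdet : P.det = 1 := by rw [← Matrix.det_transpose]; exact hdet
    rw [hPdet]
    exact isUnit_one
  · ext u w
    rw [Matrix.mul_assoc, ← Matrix.mul_assoc P D Pᵀ]
    rw [hR, hL, hL]
    have hD : ∀ a b : V, D a b = (G.dist a b : ℤ) := fun a b => rfl
    by_cases hu : u = r <;> by_cases hw : w = r
    · simp only [if_pos hu, if_pos hw, canonMat]
      have h0 : G.dist u w = 0 := by rw [hu, hw]; exact SimpleGraph.dist_self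
      simp [hD, h0]
    · simp only [if_pos hu, if_neg hw, canonMat]
      have hp2 := (hpar w hw).2
      have hd1 : G.dist u w = G.dist r w := by rw [hu]
      have hd2 : G.dist u (par w) = G.dist r (par w) := by rw [hu]
      simp only [hD]
      push_cast
      omega
    · simp only [if_neg hu, if_pos hw, canonMat]
      have hp2 := (hpar u hu).2
      have hd1 : G.dist u w = G.dist r u := by rw [hw]; exact SimpleGraph.dist_comm
      have hd2 : G.dist (par u) w = G.dist r (par u) := by rw [hw]; exact SimpleGraph.dist_comm
      simp only [hD]
      push_cast
      omega
    · by_cases huw : u = w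
      · simp only [if_neg hu, if_neg hw, if_pos huw, canonMat]
        have hadj := (hpar u hu).1
        have h0 : G.dist u w = 0 := by rw [huw]; exact SimpleGraph.dist_self
        have e1 : G.dist u (par w) = 1 := by
          rw [← huw]; exact SimpleGraph.dist_eq_one_iff_adj.mpr hadj
        have e2 : G.dist (par u) w = 1 := by
          rw [← huw]; exact SimpleGraph.dist_eq_one_iff_adj.mpr hadj.symm
        have e3 : G.dist (par u) (par w) = 0 := by rw [huw]; exact SimpleGraph.dist_self
        simp only [hD]
        push_cast
        omega
      · have hadju := (hpar u hu).1
        have hadjw := (hpar w hw).1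
        have hne : ¬(u = par w ∧ w = par u) := by
          rintro ⟨e1, e2⟩
          have p1 := (hpar u hu).2
          have p2 := (hpar w hw).2
          rw [← e1] at p2
          rw [← e2] at p1
          omega
        have key := tree_key hG hadju hadjw huw hne
        simp only [if_neg hu, if_neg hw, if_neg huw, canonMat]
        simp only [hD]
        push_cast
        omega

end TreeAux

/-- Any two trees on the same number of vertices have the same Smith normal
form of their distance matrices; equivalently, their distance matrices are equivalent
over `ℤ`. -/
theorem trees_distMatrix_coinvariant (n : ℕ) (T₁ T₂ : SimpleGraph (Fin n))
    (h₁ : T₁.IsTree) (h₂ : T₂.IsTree) :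
    MatEquivZ (distMatrix T₁) (distMatrix T₂) := by
  obtain ⟨r⟩ : Nonempty (Fin n) := h₁.isConnected.nonempty
  obtain ⟨P₁, hP₁, hE₁⟩ := tree_equiv_canon T₁ h₁ r
  obtain ⟨P₂, hP₂, hE₂⟩ := tree_equiv_canon T₂ h₂ r
  have hP₁t : IsUnit P₁ᵀ.det := by rwa [Matrix.det_transpose]
  have hP₂t : IsUnit P₂ᵀ.det := by rwa [Matrix.det_transpose]
  refine ⟨P₁⁻¹ * P₂, P₂ᵀ * P₁ᵀ⁻¹, ?_, ?_, ?_⟩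
  · rw [Matrix.det_mul]
    exact (Matrix.isUnit_nonsing_inv_det _ hP₁).mul hP₂
  · rw [Matrix.det_mul]
    exact hP₂t.mul (Matrix.isUnit_nonsing_inv_det _ hP₁t)
  · have hid : P₁⁻¹ * (P₁ * distMatrix T₁ * P₁ᵀ) * P₁ᵀ⁻¹ = distMatrix T₁ := by
      have e : P₁⁻¹ * (P₁ * distMatrix T₁ * P₁ᵀ) * P₁ᵀ⁻¹ =
          (P₁⁻¹ * P₁) * (distMatrix T₁ * (P₁ᵀ * P₁ᵀ⁻¹)) := by
        simp only [Matrix.mul_assoc]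
      rw [e, Matrix.nonsing_inv_mul _ hP₁, Matrix.mul_nonsing_inv _ hP₁t,
        Matrix.one_mul, Matrix.mul_one]
    rw [← hid, hE₁, ← hE₂]
    simp only [Matrix.mul_assoc]
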